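/- For 1 ≤ s < t ≤ p define G(s,t) = λ_s λ_t/(λ_s − λ_t)², and for 1 ≤ s < t ≤ p, 1 ≤ u < v ≤ p, 1 ≤ a ≤ p define H(s,t,u,v,a) = λ_a⁻²(λ_t − λ_a) if s = u = a and t = v; = λ_a⁻²(λ_s − λ_a) if s = u and t = v = a; and = 0 otherwise. Then for all 1 ≤ a, b ≤ p: (1/2)·∑_{1 ≤ s < t ≤ p} ∑_{1 ≤ u < v ≤ p} H(s,t,u,v,a)·H(s,t,u,v,b)·G(s,t)·G(u,v) = B_{ab}, where B_{aa} = (1/(2λ_a²))·∑_{t ≠ a} λ_t²/(λ_t − λ_a)² and B_{ab} = −1/(2(λ_a − λ_b)²) for a ≠ b. (B_{ab} is the leading term, as the sample size n → ∞, of the asymptotic information loss Δg_{ab}(l) incurred by using only the sample eigenvalues l and discarding the sample eigenvectors.) -/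

import Mathlib

/-- The leading term of the asymptotic information loss: with
`G(s,t) = λ_s λ_t/(λ_s − λ_t)²` (the inverse metric components) and `H(s,t,u,v,a)` the
m-embedding curvature of the fixed-eigenvalue submanifold,
`(1/2) ∑_{s<t} ∑_{u<v} H(s,t,u,v,a) H(s,t,u,v,b) G(s,t) G(u,v) = B_{ab}`, where
`B_{aa} = (1/(2λ_a²)) ∑_{t ≠ a} λ_t²/(λ_t − λ_a)²` and
`B_{ab} = −1/(2(λ_a − λ_b)²)` for `a ≠ b`. -/
theorem information_loss_leading_term
    (p : ℕ) (hp : 2 ≤ p)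
    (lam : Fin p → ℝ) (hlam : StrictAnti lam) (hpos : ∀ i, 0 < lam i)
    (G : Fin p → Fin p → ℝ)
    (hG : ∀ s t, G s t = lam s * lam t / (lam s - lam t) ^ 2)
    (H : Fin p → Fin p → Fin p → Fin p → Fin p → ℝ)
    (hH : ∀ s t u v a, H s t u v a =
      if s = u ∧ u = a ∧ t = v then ((lam a) ^ 2)⁻¹ * (lam t - lam a)
      else if s = u ∧ t = v ∧ v = a then ((lam a) ^ 2)⁻¹ * (lam s - lam a)
      else 0)
    (a b : Fin p) :
    (1 / 2 : ℝ) * ∑ s : Fin p, ∑ t : Fin p, ∑ u : Fin p, ∑ v : Fin p,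
        (if s < t ∧ u < v then H s t u v a * H s t u v b * G s t * G u v else 0) =
      if a = b then
        (1 / (2 * (lam a) ^ 2)) *
          ∑ t : Fin p, (if t ≠ a then (lam t) ^ 2 / (lam t - lam a) ^ 2 else 0)
      else -(1 / (2 * (lam a - lam b) ^ 2)) := by
  have hne : ∀ {s t : Fin p}, s ≠ t → lam s ≠ lam t := fun h he => h (hlam.injective he)
  have hH0 : ∀ s t u v c : Fin p, ¬(u = s ∧ v = t) → H s t u v c = 0 := by
    intro s t u v c h
    rw [hH]
    rw [if_neg (by rintro ⟨h1, h2, h3⟩; exact h ⟨h1.symm, h3.symm⟩)]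
    rw [if_neg (by rintro ⟨h1, h2, h3⟩; exact h ⟨h1.symm, h2.symm⟩)]
  have hE : ∀ s t c : Fin p, H s t s t c =
      if s = c then ((lam c) ^ 2)⁻¹ * (lam t - lam c)
      else if t = c then ((lam c) ^ 2)⁻¹ * (lam s - lam c) else 0 := by
    intro s t c
    rw [hH]
    by_cases h1 : s = c <;> by_cases h2 : t = c <;> simp [h1, h2]
  have hinner : ∀ s t : Fin p,
      (∑ u : Fin p, ∑ v : Fin p,
        if s < t ∧ u < v then H s t u v a * H s t u v b * G s t * G u v else 0)
      = if s < t then H s t s t a * H s t s t b * G s t * G s t else 0 := by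
    intro s t
    rw [Finset.sum_eq_single s]
    · rw [Finset.sum_eq_single t]
      · by_cases h : s < t
        · simp [h]
        · simp [h]
      · intro v _ hv
        rw [hH0 s t s v a (fun hc => hv hc.2)]
        simp
      · intro h; exact absurd (Finset.mem_univ t) h
    · intro u _ hu
      apply Finset.sum_eq_zero
      intro v _
      rw [hH0 s t u v a (fun hc => hu hc.1)]
      simp
    · intro h; exact absurd (Finset.mem_univ s) h
  simp only [hinner]
  by_cases hab : a = b
  · subst hab
    rw [if_pos rfl]
    have ha0 : lam a ≠ 0 := (hpos a).ne'
    have key : ∀ s t : Fin p,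
        (if s < t then H s t s t a * H s t s t a * G s t * G s t else 0)
        = (if s < t ∧ s = a then lam t ^ 2 / ((lam t - lam a) ^ 2 * lam a ^ 2) else 0)
          + (if s < t ∧ t = a then lam s ^ 2 / ((lam s - lam a) ^ 2 * lam a ^ 2) else 0) := by
      intro s t
      by_cases hst : s < t
      · by_cases hs : s = a
        · subst hs
          have ht : t ≠ s := hst.ne'
          rw [if_pos hst, if_pos ⟨hst, rfl⟩, if_neg (fun h => ht h.2), add_zero,
            hE, hG, if_pos rfl]
          have h1 : lam t - lam s ≠ 0 := sub_ne_zero.mpr (hne ht)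
          have h2 : lam s - lam t ≠ 0 := sub_ne_zero.mpr (hne hst.ne)
          field_simp
          ring
        · by_cases ht : t = a
          · subst ht
            rw [if_pos hst, if_neg (fun h => hs h.2), if_pos ⟨hst, rfl⟩, zero_add,
              hE, hG, if_neg hs, if_pos rfl]
            have h1 : lam s - lam t ≠ 0 := sub_ne_zero.mpr (hne hst.ne)
            field_simp
          · rw [if_pos hst, if_neg (fun h => hs h.2), if_neg (fun h => ht h.2),
              hE, if_neg hs, if_neg ht]
            ring
      · rw [if_neg hst, if_neg (fun h => hst h.1), if_neg (fun h => hst h.1)]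
        ring
    simp only [key, Finset.sum_add_distrib]
    have h1 : (∑ s : Fin p, ∑ t : Fin p,
        if s < t ∧ s = a then lam t ^ 2 / ((lam t - lam a) ^ 2 * lam a ^ 2) else 0)
        = ∑ t : Fin p, if a < t then lam t ^ 2 / ((lam t - lam a) ^ 2 * lam a ^ 2) else 0 := by
      rw [Finset.sum_eq_single a]
      · simp
      · intro s _ hs
        apply Finset.sum_eq_zero
        intro t _
        simp [hs]
      · simp
    have h2 : (∑ s : Fin p, ∑ t : Fin p,
        if s < t ∧ t = a then lam s ^ 2 / ((lam s - lam a) ^ 2 * lam a ^ 2) else 0)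
        = ∑ s : Fin p, if s < a then lam s ^ 2 / ((lam s - lam a) ^ 2 * lam a ^ 2) else 0 := by
      apply Finset.sum_congr rfl
      intro s _
      rw [Finset.sum_eq_single a]
      · simp
      · intro t _ ht
        simp [ht]
      · simp
    rw [h1, h2, ← Finset.sum_add_distrib, Finset.mul_sum, Finset.mul_sum]
    apply Finset.sum_congr rfl
    intro t _
    rcases lt_trichotomy a t with h | h | h
    · have hta : lam t - lam a ≠ 0 := sub_ne_zero.mpr (hne h.ne')
      rw [if_pos h, if_neg (asymm h), if_pos h.ne']
      field_simp
      ring_nf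
    · subst h
      simp
    · have hta : lam t - lam a ≠ 0 := sub_ne_zero.mpr (hne h.ne)
      rw [if_neg (asymm h), if_pos h, if_pos h.ne]
      field_simp
      ring_nf
  · rw [if_neg hab]
    have main : ∀ c d : Fin p, c < d →
        (∑ s : Fin p, ∑ t : Fin p,
          if s < t then H s t s t c * H s t s t d * G s t * G s t else 0)
        = -((lam c - lam d) ^ 2)⁻¹ := by
      intro c d hcd
      have hc0 : lam c ≠ 0 := (hpos c).ne'
      have hd0 : lam d ≠ 0 := (hpos d).ne'
      have hcd0 : lam c - lam d ≠ 0 := sub_ne_zero.mpr (hne hcd.ne)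
      have hrow : ∀ s : Fin p, s ≠ c →
          (∑ t : Fin p, if s < t then H s t s t c * H s t s t d * G s t * G s t else 0)
          = 0 := by
        intro s hs
        apply Finset.sum_eq_zero
        intro t _
        by_cases hta : t = c
        · subst hta
          by_cases hsb : s = d
          · subst hsb
            rw [if_neg (asymm hcd)]
          · rw [hE s t d, if_neg hsb, if_neg hcd.ne]
            simp
        · rw [hE s t c, if_neg hs, if_neg hta]
          simp
      have hcol : ∀ t : Fin p, t ≠ d →
          (if c < t then H c t c t c * H c t c t d * G c t * G c t else 0) = 0 := by
        intro t ht
        rw [hE c t d, if_neg hcd.ne, if_neg ht]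
        simp
      rw [Finset.sum_eq_single c (fun s _ hs => hrow s hs)
        (fun h => absurd (Finset.mem_univ c) h)]
      rw [Finset.sum_eq_single d (fun t _ ht => hcol t ht)
        (fun h => absurd (Finset.mem_univ d) h)]
      rw [if_pos hcd]
      simp only [hE, hG, if_pos rfl, if_neg hcd.ne, eq_self_iff_true, if_true]
      field_simp
      ring
    rcases lt_or_gt_of_ne hab with h | h
    · rw [main a b h]
      have : lam a - lam b ≠ 0 := sub_ne_zero.mpr (hne hab)
      field_simp
    · have hswap : (∑ s : Fin p, ∑ t : Fin p,
          if s < t then H s t s t a * H s t s t b * G s t * G s t else 0)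
          = ∑ s : Fin p, ∑ t : Fin p,
            if s < t then H s t s t b * H s t s t a * G s t * G s t else 0 := by
        apply Finset.sum_congr rfl; intro s _
        apply Finset.sum_congr rfl; intro t _
        by_cases hst : s < t
        · rw [if_pos hst, if_pos hst]; ring
        · rw [if_neg hst, if_neg hst]
      rw [hswap, main b a h]
      have : lam a - lam b ≠ 0 := sub_ne_zero.mpr (hne hab)
      have h2 : lam b - lam a ≠ 0 := sub_ne_zero.mpr (hne (Ne.symm hab))
      field_simp
      ring
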